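/- arXiv:1502.03715 — 7 statements merged into one kernel-verified Lean document; each statement's English description precedes it below -/
import Mathlib

section
/- Let x* be a feasible solution of the s-t-path TSP LP on a finite vertex set V with distinct s,t ∈ V (i.e., x* ≥ 0, x*(δ(U)) ≥ 2 for all nonempty proper subsets U of V containing both or neither of s,t, x*(δ(U)) ≥ 1 for all nonempty proper subsets U with |U ∩ {s,t}| odd, x*(δ(v)) = 2 for v ∉ {s,t}, and x*(δ(s)) = x*(δ(t)) = 1). Define the narrow cuts as those cuts δ(U) with x*(δ(U)) < 2. Then the family of vertex sets U with s ∈ U, t ∉ U and x*(δ(U)) < 2 forms a chain under inclusion: for any two such sets U', U'', either U' ⊆ U'' or U'' ⊆ U'. -/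
open Finset

noncomputable def cut {V : Type*} [Fintype V] [DecidableEq V] (U : Finset V) :
    Finset (Sym2 V) :=
  Finset.univ.filter (fun e => ∃ u v : V, e = s(u, v) ∧ u ∈ U ∧ v ∉ U)

def IsSpanningTree {V : Type*} [Fintype V] (S : Finset (Sym2 V)) : Prop :=
  (SimpleGraph.fromEdgeSet (↑S : Set (Sym2 V))).IsTree ∧ ∀ e ∈ S, ¬ e.IsDiag

section aux
variable {V : Type*} [Fintype V] [DecidableEq V]

lemma cut_eq_image (U : Finset V) :
    cut U = (U ×ˢ Uᶜ).image (fun p : V × V => s(p.1, p.2)) := by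
  ext e
  simp only [cut, mem_filter, mem_univ, true_and, mem_image, mem_product, mem_compl]
  constructor
  · rintro ⟨u, v, rfl, hu, hv⟩; exact ⟨(u, v), ⟨hu, hv⟩, rfl⟩
  · rintro ⟨⟨u, v⟩, ⟨hu, hv⟩, rfl⟩; exact ⟨u, v, rfl, hu, hv⟩

lemma cut_sum (x : Sym2 V → ℝ) (U : Finset V) :
    ∑ e ∈ cut U, x e = ∑ u ∈ U, ∑ v ∈ Uᶜ, x s(u, v) := by
  rw [cut_eq_image, Finset.sum_image, ← Finset.sum_product']
  intro p hp q hq h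
  simp only [mem_coe, mem_product, mem_compl] at hp hq
  rw [Sym2.eq_iff] at h
  obtain ⟨h1, h2⟩ | ⟨h1, h2⟩ := h
  · exact Prod.ext h1 h2
  · exact absurd (h1 ▸ hp.1) hq.2

lemma G_symm (x : Sym2 V → ℝ) (X Y : Finset V) :
    ∑ u ∈ X, ∑ v ∈ Y, x s(u, v) = ∑ u ∈ Y, ∑ v ∈ X, x s(u, v) := by
  rw [Finset.sum_comm]
  apply Finset.sum_congr rfl; intro u _
  apply Finset.sum_congr rfl; intro v _
  rw [Sym2.eq_swap]

lemma G_union_left (x : Sym2 V → ℝ) {X X' : Finset V} (Y : Finset V) (h : Disjoint X X') :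
    ∑ u ∈ X ∪ X', ∑ v ∈ Y, x s(u, v)
      = (∑ u ∈ X, ∑ v ∈ Y, x s(u, v)) + ∑ u ∈ X', ∑ v ∈ Y, x s(u, v) :=
  Finset.sum_union h

lemma G_union_right (x : Sym2 V → ℝ) (X : Finset V) {Y Y' : Finset V} (h : Disjoint Y Y') :
    ∑ u ∈ X, ∑ v ∈ Y ∪ Y', x s(u, v)
      = (∑ u ∈ X, ∑ v ∈ Y, x s(u, v)) + ∑ u ∈ X, ∑ v ∈ Y', x s(u, v) := by
  rw [← Finset.sum_add_distrib]
  exact Finset.sum_congr rfl fun u _ => Finset.sum_union h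

end aux

/-- The narrow cuts of a feasible s-t-path TSP LP solution form a chain. -/
theorem narrow_cuts_chain {V : Type*} [Fintype V] [DecidableEq V] (s t : V) (hst : s ≠ t)
    (x : Sym2 V → ℝ) (hx0 : ∀ e, 0 ≤ x e)
    (heven : ∀ U : Finset V, U.Nonempty → U ≠ Finset.univ →
      ((s ∈ U) ↔ (t ∈ U)) → 2 ≤ ∑ e ∈ cut U, x e)
    (hodd : ∀ U : Finset V, U.Nonempty → U ≠ Finset.univ →
      ¬((s ∈ U) ↔ (t ∈ U)) → 1 ≤ ∑ e ∈ cut U, x e)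
    (hdeg : ∀ v : V, v ≠ s → v ≠ t → ∑ e ∈ cut {v}, x e = 2)
    (hdegs : ∑ e ∈ cut {s}, x e = 1) (hdegt : ∑ e ∈ cut {t}, x e = 1)
    (U' U'' : Finset V)
    (hU's : s ∈ U') (hU't : t ∉ U') (hU'n : ∑ e ∈ cut U', x e < 2)
    (hU''s : s ∈ U'') (hU''t : t ∉ U'') (hU''n : ∑ e ∈ cut U'', x e < 2) :
    U' ⊆ U'' ∨ U'' ⊆ U' := by
  by_contra hcon
  push_neg at hcon
  obtain ⟨h1, h2⟩ := hcon
  set P := U' ∩ U'' with hP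
  set Q := U' \ U'' with hQ
  set R := U'' \ U' with hR
  set S := (U' ∪ U'')ᶜ with hS
  -- set decompositions
  have hA : U' = P ∪ Q := by ext v; simp [hP, hQ]; tauto
  have hAc : U'ᶜ = R ∪ S := by ext v; simp [hR, hS]; tauto
  have hB : U'' = P ∪ R := by ext v; simp [hP, hR]; tauto
  have hBc : U''ᶜ = Q ∪ S := by ext v; simp [hQ, hS]; tauto
  have hQc : Qᶜ = P ∪ (R ∪ S) := by ext v; simp [hP, hQ, hR, hS]; tauto
  have hRc : Rᶜ = P ∪ (Q ∪ S) := by ext v; simp [hP, hQ, hR, hS]; tauto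
  -- disjointness
  have dPQ : Disjoint P Q := by rw [Finset.disjoint_left]; intro a ha hb; simp [hP, hQ] at ha hb; tauto
  have dPR : Disjoint P R := by rw [Finset.disjoint_left]; intro a ha hb; simp [hP, hR] at ha hb; tauto
  have dRS : Disjoint R S := by rw [Finset.disjoint_left]; intro a ha hb; simp [hR, hS] at ha hb; tauto
  have dQS : Disjoint Q S := by rw [Finset.disjoint_left]; intro a ha hb; simp [hQ, hS] at ha hb; tauto
  have dPRS : Disjoint P (R ∪ S) := by
    rw [Finset.disjoint_union_right]
    refine ⟨dPR, ?_⟩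
    rw [Finset.disjoint_left]; intro a ha hb; simp [hP, hS] at ha hb; tauto
  have dPQS : Disjoint P (Q ∪ S) := by
    rw [Finset.disjoint_union_right]
    refine ⟨dPQ, ?_⟩
    rw [Finset.disjoint_left]; intro a ha hb; simp [hP, hS] at ha hb; tauto
  -- expansions
  have eA : ∑ e ∈ cut U', x e
      = (∑ u ∈ P, ∑ v ∈ R, x s(u, v)) + (∑ u ∈ P, ∑ v ∈ S, x s(u, v))
        + ((∑ u ∈ Q, ∑ v ∈ R, x s(u, v)) + ∑ u ∈ Q, ∑ v ∈ S, x s(u, v)) := by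
    rw [cut_sum, hAc, hA, G_union_left x _ dPQ, G_union_right x _ dRS, G_union_right x _ dRS]
  have eB : ∑ e ∈ cut U'', x e
      = (∑ u ∈ P, ∑ v ∈ Q, x s(u, v)) + (∑ u ∈ P, ∑ v ∈ S, x s(u, v))
        + ((∑ u ∈ R, ∑ v ∈ Q, x s(u, v)) + ∑ u ∈ R, ∑ v ∈ S, x s(u, v)) := by
    rw [cut_sum, hBc, hB, G_union_left x _ dPR, G_union_right x _ dQS, G_union_right x _ dQS]
  have eQ : ∑ e ∈ cut Q, x e
      = (∑ u ∈ Q, ∑ v ∈ P, x s(u, v)) + ((∑ u ∈ Q, ∑ v ∈ R, x s(u, v))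
        + ∑ u ∈ Q, ∑ v ∈ S, x s(u, v)) := by
    rw [cut_sum, hQc, G_union_right x _ dPRS.symm.symm]
    · rw [G_union_right x _ dRS]
  have eR : ∑ e ∈ cut R, x e
      = (∑ u ∈ R, ∑ v ∈ P, x s(u, v)) + ((∑ u ∈ R, ∑ v ∈ Q, x s(u, v))
        + ∑ u ∈ R, ∑ v ∈ S, x s(u, v)) := by
    rw [cut_sum, hRc, G_union_right x _ dPQS, G_union_right x _ dQS]
  -- Q and R are nonempty proper sets avoiding both s and t
  have hsQ : s ∉ Q := fun h => (Finset.mem_sdiff.mp h).2 hU''s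
  have htQ : t ∉ Q := fun h => hU't (Finset.mem_sdiff.mp h).1
  have hsR : s ∉ R := fun h => (Finset.mem_sdiff.mp h).2 hU's
  have htR : t ∉ R := fun h => hU''t (Finset.mem_sdiff.mp h).1
  have hQne : Q.Nonempty := Finset.sdiff_nonempty.mpr h1
  have hRne : R.Nonempty := Finset.sdiff_nonempty.mpr h2
  have hQu : Q ≠ Finset.univ := fun h => hsQ (h ▸ Finset.mem_univ s)
  have hRu : R ≠ Finset.univ := fun h => hsR (h ▸ Finset.mem_univ s)
  have h2Q : 2 ≤ ∑ e ∈ cut Q, x e := heven Q hQne hQu (iff_of_false hsQ htQ)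
  have h2R : 2 ≤ ∑ e ∈ cut R, x e := heven R hRne hRu (iff_of_false hsR htR)
  have hPS : 0 ≤ ∑ u ∈ P, ∑ v ∈ S, x s(u, v) :=
    Finset.sum_nonneg fun u _ => Finset.sum_nonneg fun v _ => hx0 _
  have sPR := G_symm x P R
  have sPQ := G_symm x P Q
  linarith
end

section
/- Let x* be a feasible solution of the s-t-path TSP LP. Suppose U' ⊂ U'' are two vertex sets with s ∈ U', t ∉ U'', defining two distinct narrow cuts C = δ(U') and C' = δ(U'') (so x*(C) < 2 and x*(C') < 2). Then x*(C ∩ C') ≤ (1/2)x*(C) + (1/2)x*(C') − 1. -/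
open Finset

lemma mem_cut_iff {V : Type*} [Fintype V] [DecidableEq V] (U : Finset V) (u v : V) :
    s(u, v) ∈ cut U ↔ (u ∈ U ∧ v ∉ U) ∨ (v ∈ U ∧ u ∉ U) := by
  simp only [cut, Finset.mem_filter, Finset.mem_univ, true_and]
  constructor
  · rintro ⟨a, b, hab, ha, hb⟩
    rw [Sym2.eq_iff] at hab
    rcases hab with ⟨rfl, rfl⟩ | ⟨rfl, rfl⟩
    · exact Or.inl ⟨ha, hb⟩
    · exact Or.inr ⟨ha, hb⟩
  · rintro (⟨h1, h2⟩ | ⟨h1, h2⟩)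
    · exact ⟨u, v, rfl, h1, h2⟩
    · exact ⟨v, u, Sym2.eq_swap, h1, h2⟩

/-- Two nested narrow cuts have small intersection. -/
theorem narrow_cuts_small_intersection {V : Type*} [Fintype V] [DecidableEq V]
    (s t : V) (hst : s ≠ t)
    (x : Sym2 V → ℝ) (hx0 : ∀ e, 0 ≤ x e)
    (heven : ∀ W : Finset V, W.Nonempty → W ≠ Finset.univ →
      ((s ∈ W) ↔ (t ∈ W)) → 2 ≤ ∑ e ∈ cut W, x e)
    (U' U'' : Finset V) (hsub : U' ⊂ U'')
    (hU's : s ∈ U') (hU''t : t ∉ U'')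
    (hU'n : ∑ e ∈ cut U', x e < 2) (hU''n : ∑ e ∈ cut U'', x e < 2) :
    ∑ e ∈ cut U' ∩ cut U'', x e ≤
      (1/2) * (∑ e ∈ cut U', x e) + (1/2) * (∑ e ∈ cut U'', x e) - 1 := by
  set B : Finset V := U'' \ U' with hB
  -- B is nonempty, proper, and avoids s and t
  obtain ⟨a, haU'', haU'⟩ := Finset.exists_of_ssubset hsub
  have hBne : B.Nonempty := ⟨a, Finset.mem_sdiff.mpr ⟨haU'', haU'⟩⟩
  have hsB : s ∉ B := fun h => (Finset.mem_sdiff.mp h).2 hU's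
  have htB : t ∉ B := fun h => hU''t (Finset.mem_sdiff.mp h).1
  have hBuniv : B ≠ Finset.univ := fun h => hsB (h ▸ Finset.mem_univ s)
  have hB2 : 2 ≤ ∑ e ∈ cut B, x e := heven B hBne hBuniv (by simp [hsB, htB])
  -- key pointwise identity
  have key : ∀ e : Sym2 V,
      (if e ∈ cut U' then x e else 0) + (if e ∈ cut U'' then x e else 0) =
      (if e ∈ cut B then x e else 0) +
        2 * (if e ∈ cut U' ∩ cut U'' then x e else 0) := by
    intro e
    induction e using Sym2.ind with
    | _ u v =>
      have hss : U' ⊆ U'' := hsub.subset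
      simp only [Finset.mem_inter, mem_cut_iff, hB, Finset.mem_sdiff]
      by_cases hu' : u ∈ U' <;> by_cases hu'' : u ∈ U'' <;>
        by_cases hv' : v ∈ U' <;> by_cases hv'' : v ∈ U'' <;>
        first
          | (exfalso; exact hu'' (hss hu'))
          | (exfalso; exact hv'' (hss hv'))
          | (simp [hu', hu'', hv', hv'']; try ring)
  have hsum : ∀ (S : Finset (Sym2 V)),
      ∑ e ∈ S, x e = ∑ e ∈ Finset.univ, (if e ∈ S then x e else 0) := by
    intro S
    rw [Finset.sum_ite_mem, Finset.univ_inter]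
  have main : ∑ e ∈ cut U', x e + ∑ e ∈ cut U'', x e =
      ∑ e ∈ cut B, x e + 2 * ∑ e ∈ cut U' ∩ cut U'', x e := by
    rw [hsum (cut U'), hsum (cut U''), hsum (cut B), hsum (cut U' ∩ cut U''),
      Finset.mul_sum, ← Finset.sum_add_distrib, ← Finset.sum_add_distrib]
    exact Finset.sum_congr rfl fun e _ => key e
  linarith
end

section
/- Let x* = Σ_S p_S χ^S be a convex combination of spanning trees, and let the narrow cuts be δ(L_0), …, δ(L_ℓ) for a chain {s} = L_0 ⊂ L_1 ⊂ ⋯ ⊂ L_ℓ = V\{t}. For each spanning tree S let I_S be its s-t-path. Then Σ_{C narrow} Σ_{S : |S∩C| = 1} p_S χ^{S∩C} ≤ Σ_S p_S χ^{I_S} (componentwise as vectors in ℝ^E). -/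
open Finset

/-- A walk from inside U to outside U has an edge in S ∩ cut U. -/
lemma walk_boundary {V : Type*} [Fintype V] [DecidableEq V] {S : Finset (Sym2 V)}
    {a b : V} (P : (SimpleGraph.fromEdgeSet (↑S : Set (Sym2 V))).Walk a b)
    (U : Finset V) (ha : a ∈ U) (hb : b ∉ U) :
    ∃ f ∈ P.edges, f ∈ S ∩ cut U := by
  obtain ⟨d, hd, h1, h2⟩ := P.exists_boundary_dart (↑U) ha hb
  have hedge : d.edge ∈ P.edges := by
    rw [SimpleGraph.Walk.edges]
    exact List.mem_map_of_mem hd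
  refine ⟨d.edge, hedge, Finset.mem_inter.2 ⟨?_, ?_⟩⟩
  · have := P.edges_subset_edgeSet hedge
    rw [SimpleGraph.edgeSet_fromEdgeSet] at this
    exact_mod_cast this.1
  · exact Finset.mem_filter.2 ⟨Finset.mem_univ _, d.fst, d.snd, rfl, h1, h2⟩

/-- Sebő's packing inequality: the single tree edges in narrow cuts are
dominated by the s-t-paths of the trees, componentwise. -/
theorem sebo_packing {V : Type*} [Fintype V] [DecidableEq V]
    (s t : V) (hst : s ≠ t)
    (x : Sym2 V → ℝ) (𝒮 : Finset (Finset (Sym2 V)))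
    (htree : ∀ S ∈ 𝒮, IsSpanningTree S)
    (p : Finset (Sym2 V) → ℝ) (hp0 : ∀ S ∈ 𝒮, 0 ≤ p S) (hp1 : ∑ S ∈ 𝒮, p S = 1)
    (hx : ∀ e, x e = ∑ S ∈ 𝒮, p S * (if e ∈ S then 1 else 0))
    (I : Finset (Sym2 V) → Finset (Sym2 V))
    (hIpath : ∀ S ∈ 𝒮, ∃ P : (SimpleGraph.fromEdgeSet (↑S : Set (Sym2 V))).Walk s t,
      P.IsPath ∧ I S = P.edges.toFinset)
    (ℓ : ℕ) (L : ℕ → Finset V)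
    (hL0 : L 0 = {s}) (hLl : L ℓ = Finset.univ \ {t})
    (hchain : ∀ i < ℓ, L i ⊂ L (i+1))
    (hnarrow : ∀ i ≤ ℓ, ∑ e ∈ cut (L i), x e < 2) :
    ∀ e : Sym2 V,
      ∑ i ∈ Finset.range (ℓ+1),
        ∑ S ∈ 𝒮.filter (fun S => (S ∩ cut (L i)).card = 1),
          p S * (if e ∈ S ∩ cut (L i) then 1 else 0)
      ≤ ∑ S ∈ 𝒮, p S * (if e ∈ I S then 1 else 0) := by
  intro e
  -- chain monotonicity
  have hmono : ∀ j, j ≤ ℓ → ∀ i, i ≤ j → L i ⊆ L j := by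
    intro j
    induction j with
    | zero => intro _ i hi; interval_cases i; exact subset_rfl
    | succ n ih =>
      intro hj i hi
      rcases Nat.eq_or_lt_of_le hi with h | h
      · subst h; exact subset_rfl
      · exact (ih (by omega) i (by omega)).trans (hchain n (by omega)).subset
  have hsL : ∀ i ≤ ℓ, s ∈ L i := by
    intro i hi
    exact hmono i hi 0 (Nat.zero_le _) (by rw [hL0]; exact Finset.mem_singleton_self s)
  have htL : ∀ i ≤ ℓ, t ∉ L i := by
    intro i hi h
    have := hmono ℓ le_rfl i hi h
    rw [hLl] at this
    simp at this
  -- swap sums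
  simp only [Finset.sum_filter]
  rw [Finset.sum_comm]
  apply Finset.sum_le_sum
  intro S hS
  -- set up per-tree facts
  simp only [mul_ite, mul_one, mul_zero, ← ite_and]
  -- key uniqueness claim
  have key : ∀ i j, i < j → j ≤ ℓ →
      (S ∩ cut (L i)).card = 1 → e ∈ S ∩ cut (L i) →
      (S ∩ cut (L j)).card = 1 → e ∈ S ∩ cut (L j) → False := by
    intro i j hij hj hci hei hcj hej
    have hiℓ : i ≤ ℓ := le_of_lt (lt_of_lt_of_le hij hj)
    have hSi : S ∩ cut (L i) = {e} := by
      obtain ⟨a, ha⟩ := Finset.card_eq_one.1 hci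
      rw [ha] at hei ⊢
      rw [Finset.mem_singleton] at hei
      rw [hei]
    have hSj : S ∩ cut (L j) = {e} := by
      obtain ⟨a, ha⟩ := Finset.card_eq_one.1 hcj
      rw [ha] at hej ⊢
      rw [Finset.mem_singleton] at hej
      rw [hej]
    obtain ⟨-, u, v, heq, hu, hv⟩ := Finset.mem_filter.1 (Finset.mem_inter.1 hei).2
    obtain ⟨-, u', v', heq', hu', hv'⟩ := Finset.mem_filter.1 (Finset.mem_inter.1 hej).2
    have hvj : v ∉ L j := by
      rw [heq] at heq'
      rcases Sym2.eq_iff.1 heq' with ⟨h1, h2⟩ | ⟨h1, h2⟩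
      · rw [h2]; exact hv'
      · exact absurd (hmono j hj i (le_of_lt hij) hu) (h1 ▸ hv')
    -- the middle set
    have hssub : L i ⊂ L j := lt_of_lt_of_le (hchain i (by omega))
      (hmono j hj (i+1) (by omega))
    obtain ⟨w, hwj, hwi⟩ := Finset.exists_of_ssubset hssub
    -- walk from w to s in the tree
    obtain ⟨P⟩ := (htree S hS).1.isConnected.preconnected w s
    have hsM : s ∉ L j \ L i := by
      simp [hsL i hiℓ]
    obtain ⟨f, -, hf⟩ := walk_boundary P (L j \ L i) (Finset.mem_sdiff.2 ⟨hwj, hwi⟩) hsM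
    obtain ⟨hfS, hfc⟩ := Finset.mem_inter.1 hf
    obtain ⟨-, a, b, hfeq, hab1, hab2⟩ := Finset.mem_filter.1 hfc
    rw [Finset.mem_sdiff] at hab1
    obtain ⟨haj, hai⟩ := hab1
    rw [Finset.mem_sdiff, not_and_or, not_not] at hab2
    -- in both cases f = e, contradiction
    have hfe : f = e := by
      rcases hab2 with hb | hb
      · -- b ∉ L j : f ∈ cut (L j)
        have : f ∈ S ∩ cut (L j) := Finset.mem_inter.2 ⟨hfS,
          Finset.mem_filter.2 ⟨Finset.mem_univ _, a, b, hfeq, haj, hb⟩⟩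
        rw [hSj] at this; exact Finset.mem_singleton.1 this
      · -- b ∈ L i : f ∈ cut (L i)
        have : f ∈ S ∩ cut (L i) := Finset.mem_inter.2 ⟨hfS,
          Finset.mem_filter.2 ⟨Finset.mem_univ _, b, a, by rw [hfeq, Sym2.eq_swap], hb, hai⟩⟩
        rw [hSi] at this; exact Finset.mem_singleton.1 this
    rw [hfe, heq] at hfeq
    rcases Sym2.eq_iff.1 hfeq.symm with ⟨h1, h2⟩ | ⟨h1, h2⟩
    · exact hai (h1 ▸ hu)
    · exact hvj (h1 ▸ haj)
  by_cases hQ : ∃ i ∈ Finset.range (ℓ+1), (S ∩ cut (L i)).card = 1 ∧ e ∈ S ∩ cut (L i)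
  · obtain ⟨i, hi, hQi⟩ := hQ
    have hiℓ : i ≤ ℓ := by simpa [Nat.lt_succ_iff] using hi
    -- e ∈ I S
    have heI : e ∈ I S := by
      obtain ⟨P, hP, hIS⟩ := hIpath S hS
      obtain ⟨f, hfP, hf⟩ := walk_boundary P (L i) (hsL i hiℓ) (htL i hiℓ)
      have hSi : S ∩ cut (L i) = {e} := by
        obtain ⟨a, ha⟩ := Finset.card_eq_one.1 hQi.1
        rw [ha] at hQi ⊢
        rw [Finset.mem_singleton] at hQi
        rw [hQi.2]
      rw [hSi, Finset.mem_singleton] at hf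
      rw [hIS, List.mem_toFinset]
      exact hf ▸ hfP
    rw [if_pos heI]
    rw [Finset.sum_eq_single i]
    · rw [if_pos hQi]
    · intro j hj hji
      rcases hQj : decide ((S ∩ cut (L j)).card = 1 ∧ e ∈ S ∩ cut (L j)) with _ | _
      · simp only [decide_eq_false_iff_not] at hQj
        exact if_neg hQj
      · simp only [decide_eq_true_eq] at hQj
        exfalso
        rcases lt_or_gt_of_ne hji with h | h
        · exact key j i h hiℓ hQj.1 hQj.2 hQi.1 hQi.2
        · exact key i j h (by simpa [Nat.lt_succ_iff] using hj) hQi.1 hQi.2 hQj.1 hQj.2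
    · intro h; exact absurd hi h
  · push_neg at hQ
    have : ∀ i ∈ Finset.range (ℓ+1),
        (if (S ∩ cut (L i)).card = 1 ∧ e ∈ S ∩ cut (L i) then p S else 0) = 0 := by
      intro i hi
      exact if_neg (fun h => hQ i hi h.1 h.2)
    rw [Finset.sum_eq_zero this]
    split
    · exact hp0 S hS
    · exact le_rfl
end

section
/- Let x* = Σ_S p_S χ^S be a convex combination of spanning trees and C a narrow cut (every spanning tree meets C; x*(C) < 2). Set p_one := Σ_{|S∩C|=1} p_S, p_even := Σ_{|S∩C| even} p_S, and for each tree define a benefit b_{S,C} with b_{S,C} = 1/2 whenever |S∩C| = 1 or |S∩C| is even, and b_{S,C} = 0 otherwise, and let β = 2/5. Then Σ_S p_S b_{S,C} ≥ (β/(1−2β))·(2 − x*(C))·p_even, i.e., (1/2)(p_one + p_even) ≥ 2(2 − x*(C)) p_even. -/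
open Finset

lemma walk_cross {V : Type*} [DecidableEq V] (G : SimpleGraph V) {u v : V}
    (w : G.Walk u v) (U : Finset V) (hu : u ∈ U) (hv : v ∉ U) :
    ∃ a b : V, G.Adj a b ∧ a ∈ U ∧ b ∉ U := by
  induction w with
  | nil => exact absurd hu hv
  | @cons a c d h q ih =>
    by_cases hc : c ∈ U
    · exact ih hc hv
    · exact ⟨a, c, h, hu, hc⟩

lemma tree_cross {V : Type*} [Fintype V] [DecidableEq V] {S : Finset (Sym2 V)}
    (hS : IsSpanningTree S) (U : Finset V) (hU : U.Nonempty) (hU' : U ≠ Finset.univ) :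
    (S ∩ cut U).Nonempty := by
  obtain ⟨u, hu⟩ := hU
  have : ∃ v : V, v ∉ U := by
    by_contra h
    push_neg at h
    exact hU' (Finset.eq_univ_iff_forall.2 h)
  obtain ⟨v, hv⟩ := this
  have hconn := hS.1.isConnected
  obtain ⟨w⟩ := hconn.preconnected u v
  obtain ⟨a, c, hadj, ha, hc⟩ := walk_cross _ w U hu hv
  rw [SimpleGraph.fromEdgeSet_adj] at hadj
  refine ⟨s(a, c), Finset.mem_inter.2 ⟨hadj.1, ?_⟩⟩
  simp only [cut, Finset.mem_filter, Finset.mem_univ, true_and]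
  exact ⟨a, c, rfl, ha, hc⟩

/-- With benefit 1/2 for trees with exactly one or an even number of edges in a
narrow cut and β = 2/5, the total benefit suffices:
Σ p_S b_{S,C} ≥ (β/(1-2β))(2 - x*(C)) p_even. -/
theorem benefit_half_suffices {V : Type*} [Fintype V] [DecidableEq V]
    (x : Sym2 V → ℝ) (𝒮 : Finset (Finset (Sym2 V)))
    (htree : ∀ S ∈ 𝒮, IsSpanningTree S)
    (p : Finset (Sym2 V) → ℝ) (hp0 : ∀ S ∈ 𝒮, 0 ≤ p S) (hp1 : ∑ S ∈ 𝒮, p S = 1)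
    (hx : ∀ e, x e = ∑ S ∈ 𝒮, p S * (if e ∈ S then 1 else 0))
    (U : Finset V) (hU : U.Nonempty) (hU' : U ≠ Finset.univ)
    (hnarrow : ∑ e ∈ cut U, x e < 2)
    (b : Finset (Sym2 V) → ℝ)
    (hb : ∀ S ∈ 𝒮, b S =
      if (S ∩ cut U).card = 1 ∨ Even ((S ∩ cut U).card) then 1/2 else 0) :
    (2/5 : ℝ) / (1 - 2 * (2/5)) * (2 - ∑ e ∈ cut U, x e) *
        (∑ S ∈ 𝒮.filter (fun S => Even ((S ∩ cut U).card)), p S)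
      ≤ ∑ S ∈ 𝒮, p S * b S := by
  set C := cut U with hC
  -- every tree crosses the cut
  have hcross : ∀ S ∈ 𝒮, 1 ≤ (S ∩ C).card := fun S hS =>
    Finset.card_pos.2 (tree_cross (htree S hS) U hU hU')
  -- x(C) = Σ p_S |S ∩ C|
  have hxC : ∑ e ∈ C, x e = ∑ S ∈ 𝒮, p S * ((S ∩ C).card : ℝ) := by
    simp only [hx]
    rw [Finset.sum_comm]
    refine Finset.sum_congr rfl fun S _ => ?_
    rw [← Finset.mul_sum, Finset.sum_ite_mem, Finset.sum_const, nsmul_eq_mul, mul_one,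
      Finset.inter_comm]
  set p1 := ∑ S ∈ 𝒮.filter (fun S => (S ∩ C).card = 1), p S with hp1def
  set pe := ∑ S ∈ 𝒮.filter (fun S => Even ((S ∩ C).card)), p S with hpedef
  have hp1nonneg : 0 ≤ p1 := Finset.sum_nonneg fun S hS => hp0 S (Finset.mem_filter.1 hS).1
  have hpenonneg : 0 ≤ pe := Finset.sum_nonneg fun S hS => hp0 S (Finset.mem_filter.1 hS).1
  -- split of total mass
  have hsplit1 : ∑ S ∈ 𝒮.filter (fun S => ¬ (S ∩ C).card = 1), p S = 1 - p1 := by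
    have := Finset.sum_filter_add_sum_filter_not 𝒮 (fun S => (S ∩ C).card = 1) p
    rw [hp1] at this
    linarith
  have hsplite : ∑ S ∈ 𝒮.filter (fun S => ¬ Even ((S ∩ C).card)), p S = 1 - pe := by
    have := Finset.sum_filter_add_sum_filter_not 𝒮 (fun S => Even ((S ∩ C).card)) p
    rw [hp1] at this
    linarith
  -- (i) x(C) ≥ 2 - p1
  have hi : 2 - p1 ≤ ∑ e ∈ C, x e := by
    rw [hxC, ← Finset.sum_filter_add_sum_filter_not 𝒮 (fun S => (S ∩ C).card = 1)]
    have h1 : p1 ≤ ∑ S ∈ 𝒮.filter (fun S => (S ∩ C).card = 1), p S * ((S ∩ C).card : ℝ) := by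
      refine Finset.sum_le_sum fun S hS => ?_
      obtain ⟨hS1, hS2⟩ := Finset.mem_filter.1 hS
      rw [hS2]
      simp
    have h2 : 2 * (1 - p1) ≤
        ∑ S ∈ 𝒮.filter (fun S => ¬ (S ∩ C).card = 1), p S * ((S ∩ C).card : ℝ) := by
      rw [← hsplit1, Finset.mul_sum]
      refine Finset.sum_le_sum fun S hS => ?_
      obtain ⟨hS1, hS2⟩ := Finset.mem_filter.1 hS
      have h2' : 2 ≤ (S ∩ C).card := by
        have := hcross S hS1
        omega
      have : (2 : ℝ) ≤ ((S ∩ C).card : ℝ) := by exact_mod_cast h2'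
      rw [mul_comm 2 (p S)]
      exact mul_le_mul_of_nonneg_left this (hp0 S hS1)
    linarith
  -- (ii) x(C) ≥ 1 + pe
  have hii : 1 + pe ≤ ∑ e ∈ C, x e := by
    rw [hxC, ← Finset.sum_filter_add_sum_filter_not 𝒮 (fun S => Even ((S ∩ C).card))]
    have h1 : 2 * pe ≤ ∑ S ∈ 𝒮.filter (fun S => Even ((S ∩ C).card)),
        p S * ((S ∩ C).card : ℝ) := by
      rw [Finset.mul_sum]
      refine Finset.sum_le_sum fun S hS => ?_
      obtain ⟨hS1, hS2⟩ := Finset.mem_filter.1 hS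
      have h2' : 2 ≤ (S ∩ C).card := by
        have := hcross S hS1
        rcases hS2 with ⟨k, hk⟩
        omega
      have : (2 : ℝ) ≤ ((S ∩ C).card : ℝ) := by exact_mod_cast h2'
      rw [mul_comm 2 (p S)]
      exact mul_le_mul_of_nonneg_left this (hp0 S hS1)
    have h2 : 1 - pe ≤ ∑ S ∈ 𝒮.filter (fun S => ¬ Even ((S ∩ C).card)),
        p S * ((S ∩ C).card : ℝ) := by
      rw [← hsplite]
      refine Finset.sum_le_sum fun S hS => ?_
      obtain ⟨hS1, _⟩ := Finset.mem_filter.1 hS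
      have : (1 : ℝ) ≤ ((S ∩ C).card : ℝ) := by exact_mod_cast hcross S hS1
      nlinarith [hp0 S hS1]
    linarith
  -- (iii) Σ p b = (1/2)(p1 + pe)
  have hiii : ∑ S ∈ 𝒮, p S * b S = (1/2) * (p1 + pe) := by
    have : ∑ S ∈ 𝒮, p S * b S =
        ∑ S ∈ 𝒮, (if (S ∩ C).card = 1 ∨ Even ((S ∩ C).card) then p S * (1/2) else 0) := by
      refine Finset.sum_congr rfl fun S hS => ?_
      rw [hb S hS]
      split <;> simp
    have hdisj : Disjoint (𝒮.filter (fun S => (S ∩ C).card = 1))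
        (𝒮.filter (fun S => Even ((S ∩ C).card))) := by
      rw [Finset.disjoint_left]
      intro S hS1 hS2
      have h1 := (Finset.mem_filter.1 hS1).2
      have h2 := (Finset.mem_filter.1 hS2).2
      rw [h1] at h2
      exact (Nat.not_even_iff.2 rfl) h2
    rw [this, Finset.sum_ite, Finset.sum_const_zero, add_zero, Finset.filter_or,
      Finset.sum_union hdisj, ← Finset.sum_mul, ← Finset.sum_mul]
    ring
  -- final arithmetic
  have ha : 0 < 2 - ∑ e ∈ C, x e := by linarith
  have hab : (2 - ∑ e ∈ C, x e) + pe ≤ 1 := by linarith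
  have hap1 : 2 - ∑ e ∈ C, x e ≤ p1 := by linarith
  rw [hiii]
  have key : 4 * (2 - ∑ e ∈ C, x e) * pe ≤ p1 + pe := by
    nlinarith [sq_nonneg ((2 - ∑ e ∈ C, x e) - pe)]
  norm_num
  nlinarith
end

section
/- Let C ⊆ E be a cut, let p be a probability distribution on spanning trees with Σ_S p_S |S∩C| = x*(C) and |S∩C| ≥ 1 for all S in the support, let p_even = Σ_{|S∩C| even} p_S, p_many = Σ_S p_S ⌊(|S∩C|−1)/2⌋, and let ν, β be reals with (2β/(1−2β))(2 − x*(C)) ≥ (4ν−1)/2 ≥ 0 and p_even ≤ x*(C) − 1. Then (2β(2−x*(C))/(1−2β))·p_even + (4ν−1)·p_many ≤ (2β/(1−2β))·(x*(C)−1)·(2−x*(C)). -/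
open Finset

/-- Bounding the combination of p_even and p_many at a cut. -/
theorem p_even_p_many_bound {V : Type*} [Fintype V] [DecidableEq V]
    (𝒮 : Finset (Finset (Sym2 V)))
    (htree : ∀ S ∈ 𝒮, IsSpanningTree S)
    (p : Finset (Sym2 V) → ℝ) (hp0 : ∀ S ∈ 𝒮, 0 ≤ p S) (hp1 : ∑ S ∈ 𝒮, p S = 1)
    (U : Finset V) (xC : ℝ)
    (hxC : ∑ S ∈ 𝒮, p S * ((S ∩ cut U).card : ℝ) = xC)
    (hmeet : ∀ S ∈ 𝒮, p S ≠ 0 → 1 ≤ (S ∩ cut U).card)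
    (ν β : ℝ)
    (h1 : (4*ν - 1) / 2 ≤ 2*β / (1 - 2*β) * (2 - xC))
    (h2 : 0 ≤ (4*ν - 1) / 2)
    (h3 : (∑ S ∈ 𝒮.filter (fun S => Even ((S ∩ cut U).card)), p S) ≤ xC - 1) :
    2*β * (2 - xC) / (1 - 2*β) *
        (∑ S ∈ 𝒮.filter (fun S => Even ((S ∩ cut U).card)), p S)
      + (4*ν - 1) * (∑ S ∈ 𝒮, p S * ((((S ∩ cut U).card - 1) / 2 : ℕ) : ℝ))
    ≤ 2*β / (1 - 2*β) * (xC - 1) * (2 - xC) := by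
  have key : ∑ S ∈ 𝒮, p S * ((((S ∩ cut U).card - 1) / 2 : ℕ) : ℝ)
      = (xC - 1 - ∑ S ∈ 𝒮.filter (fun S => Even ((S ∩ cut U).card)), p S) / 2 := by
    have h : ∀ S ∈ 𝒮, p S * ((((S ∩ cut U).card - 1) / 2 : ℕ) : ℝ)
        = p S * (((S ∩ cut U).card : ℝ) - 1) / 2
          - (if Even ((S ∩ cut U).card) then p S else 0) / 2 := by
      intro S hS
      by_cases hp : p S = 0
      · simp [hp]
      · have hk1 : 1 ≤ (S ∩ cut U).card := hmeet S hS hp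
        by_cases he : Even ((S ∩ cut U).card)
        · rw [if_pos he]
          obtain ⟨c, hc⟩ : ∃ c, (S ∩ cut U).card = 2*c + 2 := by
            obtain ⟨a, ha⟩ := he; exact ⟨a - 1, by omega⟩
          have h2' : ((S ∩ cut U).card - 1) / 2 = c := by omega
          rw [h2', hc]
          push_cast; ring
        · rw [if_neg he]
          obtain ⟨c, hc⟩ : ∃ c, (S ∩ cut U).card = 2*c + 1 := by
            rcases Nat.even_or_odd (S ∩ cut U).card with h | ⟨a, ha⟩
            · exact absurd h he
            · exact ⟨a, ha⟩
          have h2' : ((S ∩ cut U).card - 1) / 2 = c := by omega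
          rw [h2', hc]
          push_cast; ring
    rw [Finset.sum_congr rfl h, Finset.sum_sub_distrib]
    have hA : ∑ S ∈ 𝒮, p S * (((S ∩ cut U).card : ℝ) - 1) / 2
        = (xC - 1) / 2 := by
      have : ∀ S ∈ 𝒮, p S * (((S ∩ cut U).card : ℝ) - 1) / 2
          = (p S * ((S ∩ cut U).card : ℝ) - p S) / 2 := by
        intro S _; ring
      rw [Finset.sum_congr rfl this, ← Finset.sum_div, Finset.sum_sub_distrib,
        hxC, hp1]
    have hB : ∑ S ∈ 𝒮, (if Even ((S ∩ cut U).card) then p S else 0) / 2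
        = (∑ S ∈ 𝒮.filter (fun S => Even ((S ∩ cut U).card)), p S) / 2 := by
      rw [← Finset.sum_div, Finset.sum_filter]
    rw [hA, hB]; ring
  rw [key]
  set q := ∑ S ∈ 𝒮.filter (fun S => Even ((S ∩ cut U).card)), p S with hq
  have hA : 2*β * (2 - xC) / (1 - 2*β) = 2*β / (1 - 2*β) * (2 - xC) := by ring
  have hA' : 2*β / (1 - 2*β) * (xC - 1) * (2 - xC)
      = (2*β / (1 - 2*β) * (2 - xC)) * (xC - 1) := by ring
  rw [hA, hA']
  generalize 2*β / (1 - 2*β) * (2 - xC) = A at h1 ⊢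
  nlinarith [mul_nonneg (by linarith : (0:ℝ) ≤ xC - 1 - q)
    (by linarith : (0:ℝ) ≤ A - (4*ν - 1) / 2)]
end

section
/- Let 0 ≤ β < 1/2 and let f(x) := β(2−x)(x−1)/(1−2β). Let C be a cut with 1 ≤ x*(C) ≤ 2 and f(x*(C)) ≤ 1/2, let p be a probability distribution over spanning trees with Σ_S p_S|S∩C| = x*(C) and every tree meeting C, and suppose for each tree S in the support a number b_{S,C} ≥ 0 is given such that: b_{S,C} ≥ min{β(2−x*(C))/(1−2β), f(x*(C))} if |S∩C| is even, and b_{S,C} ≥ f(x*(C)) if |S∩C| = 1. Then Σ_S p_S b_{S,C} ≥ (β(2−x*(C))/(1−2β))·p_even, where p_even = Σ_{|S∩C| even} p_S. -/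
open Finset

/-- Lemma 8 (less critical cuts): if the benefits satisfy the stated lower
bounds, then the total benefit at a cut C with f(x*(C)) ≤ 1/2 is at least
(β(2-x*(C))/(1-2β)) · p_even. -/
theorem less_critical_benefit {V : Type*} [Fintype V] [DecidableEq V]
    (β : ℝ) (hβ0 : 0 ≤ β) (hβ2 : β < 1/2)
    (f : ℝ → ℝ) (hf : ∀ y, f y = β * (2 - y) * (y - 1) / (1 - 2*β))
    (𝒮 : Finset (Finset (Sym2 V)))
    (htree : ∀ S ∈ 𝒮, IsSpanningTree S)
    (p : Finset (Sym2 V) → ℝ) (hp0 : ∀ S ∈ 𝒮, 0 ≤ p S) (hp1 : ∑ S ∈ 𝒮, p S = 1)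
    (U : Finset V) (xC : ℝ) (hxC1 : 1 ≤ xC) (hxC2 : xC ≤ 2)
    (hfxC : f xC ≤ 1/2)
    (hxCsum : ∑ S ∈ 𝒮, p S * ((S ∩ cut U).card : ℝ) = xC)
    (hmeet : ∀ S ∈ 𝒮, p S ≠ 0 → 1 ≤ (S ∩ cut U).card)
    (b : Finset (Sym2 V) → ℝ)
    (hb0 : ∀ S ∈ 𝒮, p S ≠ 0 → 0 ≤ b S)
    (hbeven : ∀ S ∈ 𝒮, p S ≠ 0 → Even ((S ∩ cut U).card) →
      min (β * (2 - xC) / (1 - 2*β)) (f xC) ≤ b S)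
    (hbone : ∀ S ∈ 𝒮, p S ≠ 0 → (S ∩ cut U).card = 1 → f xC ≤ b S) :
    β * (2 - xC) / (1 - 2*β) *
        (∑ S ∈ 𝒮.filter (fun S => Even ((S ∩ cut U).card)), p S)
      ≤ ∑ S ∈ 𝒮, p S * b S := by
  have hden : (0:ℝ) < 1 - 2*β := by linarith
  set A := β * (2 - xC) / (1 - 2*β) with hAdef
  have hA : 0 ≤ A := div_nonneg (mul_nonneg hβ0 (by linarith)) hden.le
  have hfA : f xC = A * (xC - 1) := by
    rw [hf, hAdef]; field_simp
  have hf0 : 0 ≤ f xC := by rw [hfA]; exact mul_nonneg hA (by linarith)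
  have hfleA : f xC ≤ A := by
    rw [hfA]; nlinarith
  have hmin : min A (f xC) = f xC := min_eq_right hfleA
  set E := 𝒮.filter (fun S => Even ((S ∩ cut U).card)) with hE
  set O := 𝒮.filter (fun S => (S ∩ cut U).card = 1) with hO
  set pe := ∑ S ∈ E, p S with hpe
  set po := ∑ S ∈ O, p S with hpo
  have hpe0 : 0 ≤ pe :=
    Finset.sum_nonneg fun S hS => hp0 S (Finset.mem_filter.mp hS).1
  -- pe ≤ xC - 1
  have h1 : 1 + pe ≤ xC := by
    rw [← hxCsum]
    have heq : ∑ S ∈ 𝒮, p S * (if Even ((S ∩ cut U).card) then 2 else 1)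
        = (∑ S ∈ 𝒮, p S) + pe := by
      rw [hpe, hE, Finset.sum_filter, ← Finset.sum_add_distrib]
      apply Finset.sum_congr rfl
      intro S _
      by_cases h : Even ((S ∩ cut U).card) <;> simp [h] <;> ring
    have heq2 : 1 + pe = ∑ S ∈ 𝒮, p S * (if Even ((S ∩ cut U).card) then 2 else 1) := by
      rw [heq, hp1]
    rw [heq2]
    apply Finset.sum_le_sum
    intro S hS
    by_cases hps : p S = 0
    · simp [hps]
    · have hc := hmeet S hS hps
      apply mul_le_mul_of_nonneg_left _ (hp0 S hS)
      by_cases h : Even ((S ∩ cut U).card)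
      · simp only [h, if_true]
        have : (S ∩ cut U).card ≠ 1 := by
          intro hcon; rw [hcon] at h; exact (Nat.not_even_one) h
        have : 2 ≤ (S ∩ cut U).card := by omega
        exact_mod_cast this
      · simp only [h, if_false]
        exact_mod_cast hc
  -- 2 - xC ≤ po
  have h2 : 2 - po ≤ xC := by
    rw [← hxCsum]
    have heq : ∑ S ∈ 𝒮, p S * (if (S ∩ cut U).card = 1 then 1 else 2)
        = 2 * (∑ S ∈ 𝒮, p S) - po := by
      rw [hpo, hO, Finset.sum_filter, Finset.mul_sum, ← Finset.sum_sub_distrib]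
      apply Finset.sum_congr rfl
      intro S _
      by_cases h : (S ∩ cut U).card = 1 <;> simp [h] <;> ring
    have heq2 : 2 - po = ∑ S ∈ 𝒮, p S * (if (S ∩ cut U).card = 1 then 1 else 2) := by
      rw [heq, hp1]; ring
    rw [heq2]
    apply Finset.sum_le_sum
    intro S hS
    by_cases hps : p S = 0
    · simp [hps]
    · have hc := hmeet S hS hps
      apply mul_le_mul_of_nonneg_left _ (hp0 S hS)
      by_cases h : (S ∩ cut U).card = 1
      · simp only [h, if_true]; norm_num
      · simp only [h, if_false]
        have : 2 ≤ (S ∩ cut U).card := by omega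
        exact_mod_cast this
  -- pointwise nonneg
  have hpt : ∀ S ∈ 𝒮, 0 ≤ p S * b S := by
    intro S hS
    by_cases hps : p S = 0
    · simp [hps]
    · exact mul_nonneg (hp0 S hS) (hb0 S hS hps)
  -- disjointness of E and O
  have hdisj : Disjoint E O := by
    rw [hE, hO, Finset.disjoint_filter]
    intro S _ hev hcon
    rw [hcon] at hev; exact Nat.not_even_one hev
  have hsub : E ∪ O ⊆ 𝒮 := by
    apply Finset.union_subset <;> exact Finset.filter_subset _ _
  have hsplit : ∑ S ∈ E, p S * b S + ∑ S ∈ O, p S * b S ≤ ∑ S ∈ 𝒮, p S * b S := by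
    rw [← Finset.sum_union hdisj]
    exact Finset.sum_le_sum_of_subset_of_nonneg hsub
      (fun S hS _ => hpt S hS)
  have hEb : f xC * pe ≤ ∑ S ∈ E, p S * b S := by
    rw [hpe, Finset.mul_sum]
    apply Finset.sum_le_sum
    intro S hS
    obtain ⟨hS𝒮, hev⟩ := Finset.mem_filter.mp hS
    by_cases hps : p S = 0
    · simp [hps]
    · rw [mul_comm (f xC)]
      exact mul_le_mul_of_nonneg_left (hmin ▸ hbeven S hS𝒮 hps hev) (hp0 S hS𝒮)
  have hOb : f xC * po ≤ ∑ S ∈ O, p S * b S := by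
    rw [hpo, Finset.mul_sum]
    apply Finset.sum_le_sum
    intro S hS
    obtain ⟨hS𝒮, hone⟩ := Finset.mem_filter.mp hS
    by_cases hps : p S = 0
    · simp [hps]
    · rw [mul_comm (f xC)]
      exact mul_le_mul_of_nonneg_left (hbone S hS𝒮 hps hone) (hp0 S hS𝒮)
  have hpo0 : 0 ≤ po :=
    Finset.sum_nonneg fun S hS => hp0 S (Finset.mem_filter.mp hS).1
  -- combine
  have key : A * pe ≤ f xC * pe + f xC * po := by
    rw [hfA]
    nlinarith [mul_nonneg hA hpe0, mul_nonneg hA hpo0]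
  linarith
end

section
/- Let (V,S₁) and (V,S₂) be spanning trees of the complete graph on V with s ≠ t, and let δ(L_h), δ(L_i) be two cuts from the narrow-cut chain with h < i (so s ∈ L_h ⊂ L_i, t ∉ L_i). Suppose S₂ ∩ δ(L_i) = {e₂}, S₁ ∩ δ(L_i) = {e₀, e₁} with S₁ ∩ δ(L_h) = {e₀}, and e₂ ∉ δ(L_h). Then S₁' := (S₁ \ {e₁}) ∪ {e₂} and S₂' := (S₂ \ {e₂}) ∪ {e₁} are both edge sets of spanning trees, and S₁' ∩ δ(L_i) = {e₀, e₂}, S₂' ∩ δ(L_i) = {e₁}. -/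
open Finset

lemma mem_cut' {V : Type*} [Fintype V] [DecidableEq V] {U : Finset V} {u v : V} :
    s(u, v) ∈ cut U ↔ (u ∈ U ∧ v ∉ U) ∨ (v ∈ U ∧ u ∉ U) := by
  simp only [cut, Finset.mem_filter, Finset.mem_univ, true_and]
  constructor
  · rintro ⟨a, b, hab, ha, hb⟩
    rw [Sym2.eq_iff] at hab
    rcases hab with ⟨rfl, rfl⟩ | ⟨rfl, rfl⟩ <;> tauto
  · rintro (⟨h1, h2⟩ | ⟨h1, h2⟩)
    exacts [⟨u, v, rfl, h1, h2⟩, ⟨v, u, Sym2.eq_swap.symm, h1, h2⟩]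

lemma not_mem_cut' {V : Type*} [Fintype V] [DecidableEq V] {U : Finset V} {u v : V}
    (h : s(u, v) ∉ cut U) : u ∈ U ↔ v ∈ U := by
  rw [mem_cut'] at h; tauto

/-- Reachability preserves an adjacency-invariant predicate. -/
lemma reach_pred {V : Type*} {K : SimpleGraph V} (P : V → Prop)
    (h : ∀ a b : V, K.Adj a b → (P a ↔ P b)) {a b : V} (hr : K.Reachable a b) :
    P a ↔ P b := by
  obtain ⟨w⟩ := hr
  induction w with
  | nil => rfl
  | cons hadj p ih => exact (h _ _ hadj).trans ih

/-- Walk surgery: if every edge of `G` is an edge of `K` or equals `s(x,y)`,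
then from a `G`-walk `a — b` with `b` `K`-reachable to `x` or `y`, also `a`
is `K`-reachable to `x` or `y`. -/
lemma reach_xy {V : Type*} {G K : SimpleGraph V} {x y : V}
    (h : ∀ a b : V, G.Adj a b → K.Adj a b ∨ s(a, b) = s(x, y)) {a b : V}
    (w : G.Walk a b) :
    (K.Reachable b x ∨ K.Reachable b y) → (K.Reachable a x ∨ K.Reachable a y) := by
  induction w with
  | nil => exact id
  | cons hadj p ih =>
    intro hb
    have hc := ih hb
    rcases h _ _ hadj with hk | he
    · rcases hc with h1 | h1
      · exact Or.inl (hk.reachable.trans h1)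
      · exact Or.inr (hk.reachable.trans h1)
    · rw [Sym2.eq_iff] at he
      rcases he with ⟨rfl, rfl⟩ | ⟨rfl, rfl⟩
      · exact Or.inl (SimpleGraph.Reachable.refl _)
      · exact Or.inr (SimpleGraph.Reachable.refl _)

/-- The one-sided exchange step: removing the edge `s(x,y)` from a spanning tree
and adding `s(u,v)` yields a spanning tree, provided there is a predicate `P`
invariant along all other edges of the tree which separates `x` from `y` and
`u` from `v` accordingly. -/
lemma exchange_tree {V : Type*} [Fintype V] [DecidableEq V]
    (S : Finset (Sym2 V)) (hS : IsSpanningTree S)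
    (x y u v : V) (he : s(x, y) ∈ S) (huv : u ≠ v)
    (P : V → Prop)
    (hinv : ∀ a b : V, s(a, b) ∈ S → s(a, b) ≠ s(x, y) → (P a ↔ P b))
    (hPx : P x) (hPy : ¬ P y) (hPu : P u) (hPv : ¬ P v) :
    IsSpanningTree ((S \ {s(x, y)}) ∪ {s(u, v)}) := by
  classical
  set G : SimpleGraph V := SimpleGraph.fromEdgeSet (↑S) with hG
  set K : SimpleGraph V := SimpleGraph.fromEdgeSet (↑(S \ {s(x, y)})) with hK
  set G' : SimpleGraph V :=
    SimpleGraph.fromEdgeSet (↑((S \ {s(x, y)}) ∪ {s(u, v)})) with hG'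
  have hKadj : ∀ a b : V, K.Adj a b → s(a, b) ∈ S ∧ s(a, b) ≠ s(x, y) := by
    intro a b hab
    rw [hK, SimpleGraph.fromEdgeSet_adj] at hab
    have := hab.1
    rw [Finset.mem_coe, Finset.mem_sdiff, Finset.mem_singleton] at this
    exact this
  have hKinv : ∀ a b : V, K.Adj a b → (P a ↔ P b) := by
    intro a b hab
    obtain ⟨h1, h2⟩ := hKadj a b hab
    exact hinv a b h1 h2
  have hreachP : ∀ a b : V, K.Reachable a b → (P a ↔ P b) :=
    fun a b hr => reach_pred P hKinv hr
  have hGK : ∀ a b : V, G.Adj a b → K.Adj a b ∨ s(a, b) = s(x, y) := by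
    intro a b hab
    rw [hG, SimpleGraph.fromEdgeSet_adj] at hab
    by_cases hxy : s(a, b) = s(x, y)
    · exact Or.inr hxy
    · refine Or.inl ?_
      rw [hK, SimpleGraph.fromEdgeSet_adj]
      refine ⟨?_, hab.2⟩
      rw [Finset.mem_coe, Finset.mem_sdiff, Finset.mem_singleton]
      exact ⟨hab.1, hxy⟩
  have key : ∀ a : V, K.Reachable a x ∨ K.Reachable a y := by
    intro a
    obtain ⟨w⟩ := hS.1.isConnected.preconnected a x
    exact reach_xy hGK w (Or.inl (SimpleGraph.Reachable.refl x))
  have hux : K.Reachable u x := by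
    rcases key u with h | h
    · exact h
    · exact absurd ((hreachP _ _ h).mp hPu) hPy
  have hvy : K.Reachable v y := by
    rcases key v with h | h
    · exact absurd ((hreachP _ _ h).mpr hPx) hPv
    · exact h
  have hKG' : K ≤ G' := by
    apply SimpleGraph.fromEdgeSet_mono
    exact_mod_cast Finset.subset_union_left
  have hadj' : G'.Adj u v := by
    rw [hG', SimpleGraph.fromEdgeSet_adj]
    refine ⟨?_, huv⟩
    rw [Finset.mem_coe, Finset.mem_union, Finset.mem_singleton]
    exact Or.inr rfl
  have reach'x : ∀ a : V, G'.Reachable a x := by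
    intro a
    rcases key a with h | h
    · exact h.mono hKG'
    · exact ((h.mono hKG').trans (hvy.mono hKG').symm).trans
        ((hadj'.symm.reachable).trans (hux.mono hKG'))
  have hconn : G'.Connected := by
    rw [SimpleGraph.connected_iff]
    exact ⟨fun a b => (reach'x a).trans (reach'x b).symm, ⟨x⟩⟩
  have hacyc : G'.IsAcyclic := by
    intro z c hc
    by_cases hmem : s(u, v) ∈ c.edges
    · -- s(u,v) is a bridge of G'
      have hbr : G'.IsBridge s(u, v) := by
        rw [SimpleGraph.isBridge_iff]
        refine fun hr => ?_
        have hle : (G' \ SimpleGraph.fromEdgeSet {s(u, v)}) ≤ K := by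
          intro a b hab
          rw [SimpleGraph.sdiff_adj] at hab
          obtain ⟨h1, h2⟩ := hab
          rw [hG', SimpleGraph.fromEdgeSet_adj] at h1
          rw [SimpleGraph.fromEdgeSet_adj] at h2
          have hne : s(a, b) ≠ s(u, v) := by
            intro hEq
            exact h2 ⟨by rw [hEq]; exact Set.mem_singleton _, h1.2⟩
          rw [hK, SimpleGraph.fromEdgeSet_adj]
          refine ⟨?_, h1.2⟩
          have := h1.1
          rw [Finset.mem_coe, Finset.mem_union, Finset.mem_singleton] at this
          rcases this with h3 | h3
          · exact_mod_cast h3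
          · exact absurd h3 hne
        exact absurd ((hreachP _ _ (hr.mono hle)).mp hPu) hPv
      exact ((SimpleGraph.isBridge_iff_adj_and_forall_cycle_notMem hadj').mp hbr) c hc hmem
    · -- transfer the cycle to the original tree
      have hsub : ∀ e ∈ c.edges, e ∈ G.edgeSet := by
        intro e hecp
        have hmem' : e ∈ G'.edgeSet := c.edges_subset_edgeSet hecp
        rw [hG', SimpleGraph.edgeSet_fromEdgeSet] at hmem'
        rw [hG, SimpleGraph.edgeSet_fromEdgeSet]
        obtain ⟨h1, h2⟩ := hmem'
        refine ⟨?_, h2⟩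
        rw [Finset.mem_coe, Finset.mem_union, Finset.mem_singleton] at h1
        rcases h1 with h3 | h3
        · rw [Finset.mem_coe]; exact (Finset.mem_sdiff.mp h3).1
        · exact absurd (h3 ▸ hecp) hmem
      exact hS.1.IsAcyclic (c.transfer G hsub) (hc.transfer hsub)
  refine ⟨⟨hconn, hacyc⟩, ?_⟩
  intro e heS
  rw [Finset.mem_union, Finset.mem_sdiff, Finset.mem_singleton] at heS
  rcases heS with ⟨h1, _⟩ | h1
  · exact hS.2 e h1
  · rw [Finset.mem_singleton] at h1
    rw [h1, Sym2.mk_isDiag_iff]; exact huv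

/-- The core exchange step of the reassembling lemma: swapping the edges e₁
and e₂ between the two trees yields two new spanning trees with the stated
intersections with the cut δ(L_i). -/
theorem reassemble_exchange {V : Type*} [Fintype V] [DecidableEq V]
    (s t : V) (hst : s ≠ t)
    (S₁ S₂ : Finset (Sym2 V)) (hS₁ : IsSpanningTree S₁) (hS₂ : IsSpanningTree S₂)
    (Lh Li : Finset V) (hsub : Lh ⊂ Li) (hs : s ∈ Lh) (ht : t ∉ Li)
    (e₀ e₁ e₂ : Sym2 V) (hne : e₀ ≠ e₁)
    (h2i : S₂ ∩ cut Li = {e₂})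
    (h1i : S₁ ∩ cut Li = {e₀, e₁})
    (h1h : S₁ ∩ cut Lh = {e₀})
    (h2h : e₂ ∉ cut Lh) :
    IsSpanningTree ((S₁ \ {e₁}) ∪ {e₂}) ∧
    IsSpanningTree ((S₂ \ {e₂}) ∪ {e₁}) ∧
    ((S₁ \ {e₁}) ∪ {e₂}) ∩ cut Li = {e₀, e₂} ∧
    ((S₂ \ {e₂}) ∪ {e₁}) ∩ cut Li = {e₁} := by
  classical
  -- basic memberships
  have he2m : e₂ ∈ S₂ ∧ e₂ ∈ cut Li := by
    have : e₂ ∈ S₂ ∩ cut Li := by rw [h2i]; exact Finset.mem_singleton_self e₂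
    exact Finset.mem_inter.mp this
  have he0m : e₀ ∈ S₁ ∧ e₀ ∈ cut Li := by
    have : e₀ ∈ S₁ ∩ cut Li := by
      rw [h1i]; exact Finset.mem_insert_self e₀ {e₁}
    exact Finset.mem_inter.mp this
  have he1m : e₁ ∈ S₁ ∧ e₁ ∈ cut Li := by
    have : e₁ ∈ S₁ ∩ cut Li := by
      rw [h1i]; exact Finset.mem_insert_of_mem (Finset.mem_singleton_self e₁)
    exact Finset.mem_inter.mp this
  have he0h : e₀ ∈ S₁ ∧ e₀ ∈ cut Lh := by
    have : e₀ ∈ S₁ ∩ cut Lh := by rw [h1h]; exact Finset.mem_singleton_self e₀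
    exact Finset.mem_inter.mp this
  by_cases hee : e₂ = e₁
  · -- degenerate case: the two trees already share the relevant edge
    subst hee
    have hu1 : (S₁ \ {e₂}) ∪ {e₂} = S₁ := by
      rw [Finset.sdiff_union_self_eq_union, Finset.union_eq_left]
      exact Finset.singleton_subset_iff.mpr he1m.1
    have hu2 : (S₂ \ {e₂}) ∪ {e₂} = S₂ := by
      rw [Finset.sdiff_union_self_eq_union, Finset.union_eq_left]
      exact Finset.singleton_subset_iff.mpr he2m.1
    rw [hu1, hu2]
    exact ⟨hS₁, hS₂, h1i, h2i⟩
  · have hne20 : e₂ ≠ e₀ := by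
      intro h; rw [h] at h2h; exact h2h he0h.2
    have he2S1 : e₂ ∉ S₁ := by
      intro h
      have : e₂ ∈ S₁ ∩ cut Li := Finset.mem_inter.mpr ⟨h, he2m.2⟩
      rw [h1i, Finset.mem_insert, Finset.mem_singleton] at this
      tauto
    have he1S2 : e₁ ∉ S₂ := by
      intro h
      have : e₁ ∈ S₂ ∩ cut Li := Finset.mem_inter.mpr ⟨h, he1m.2⟩
      rw [h2i, Finset.mem_singleton] at this
      exact hee this.symm
    have he1h : e₁ ∉ cut Lh := by
      intro h
      have : e₁ ∈ S₁ ∩ cut Lh := Finset.mem_inter.mpr ⟨he1m.1, h⟩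
      rw [h1h, Finset.mem_singleton] at this
      exact hne this.symm
    -- destructure the three edges
    obtain ⟨u, v, rfl, hu, hv⟩ : ∃ u v : V, e₂ = s(u, v) ∧ u ∈ Li ∧ v ∉ Li := by
      have := he2m.2
      simp only [cut, Finset.mem_filter, Finset.mem_univ, true_and] at this
      exact this
    obtain ⟨x, y, rfl, hx, hy⟩ : ∃ x y : V, e₁ = s(x, y) ∧ x ∈ Li ∧ y ∉ Li := by
      have := he1m.2
      simp only [cut, Finset.mem_filter, Finset.mem_univ, true_and] at this
      exact this
    obtain ⟨p, q, rfl, hp, hq⟩ : ∃ p q : V, e₀ = s(p, q) ∧ p ∈ Lh ∧ q ∉ Lh := by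
      have := he0h.2
      simp only [cut, Finset.mem_filter, Finset.mem_univ, true_and] at this
      exact this
    have hLhLi : Lh ⊆ Li := hsub.subset
    have hpLi : p ∈ Li := hLhLi hp
    have hqLi : q ∉ Li := by
      have := he0m.2
      rw [mem_cut'] at this
      rcases this with ⟨_, h2⟩ | ⟨_, h2⟩
      · exact h2
      · exact absurd hpLi h2
    have hyLh : y ∉ Lh := fun h => hy (hLhLi h)
    have hvLh : v ∉ Lh := fun h => hv (hLhLi h)
    have hxLh : x ∉ Lh := by
      intro h
      exact he1h (mem_cut'.mpr (Or.inl ⟨h, hyLh⟩))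
    have huLh : u ∉ Lh := by
      intro h
      exact h2h (mem_cut'.mpr (Or.inl ⟨h, hvLh⟩))
    have hxy : x ≠ y := fun h => hy (h ▸ hx)
    have huv : u ≠ v := fun h => hv (h ▸ hu)
    -- the first exchanged tree
    have hT1 : IsSpanningTree ((S₁ \ {s(x, y)}) ∪ {s(u, v)}) := by
      refine exchange_tree S₁ hS₁ x y u v he1m.1 huv (fun a => a ∈ Li ∧ a ∉ Lh)
        ?_ ⟨hx, hxLh⟩ (fun h => hy h.1) ⟨hu, huLh⟩ (fun h => hv h.1)
      intro a b haS hne1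
      by_cases h0 : s(a, b) = s(p, q)
      · rw [Sym2.eq_iff] at h0
        rcases h0 with ⟨rfl, rfl⟩ | ⟨rfl, rfl⟩
        · exact iff_of_false (fun h => h.2 hp) (fun h => hqLi h.1)
        · exact iff_of_false (fun h => hqLi h.1) (fun h => h.2 hp)
      · have hci : s(a, b) ∉ cut Li := by
          intro h
          have : s(a, b) ∈ S₁ ∩ cut Li := Finset.mem_inter.mpr ⟨haS, h⟩
          rw [h1i, Finset.mem_insert, Finset.mem_singleton] at this
          tauto
        have hch : s(a, b) ∉ cut Lh := by
          intro h
          have : s(a, b) ∈ S₁ ∩ cut Lh := Finset.mem_inter.mpr ⟨haS, h⟩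
          rw [h1h, Finset.mem_singleton] at this
          exact h0 this
        have h1 := not_mem_cut' hci
        have h2 := not_mem_cut' hch
        constructor
        · rintro ⟨ha1, ha2⟩; exact ⟨h1.mp ha1, fun h => ha2 (h2.mpr h)⟩
        · rintro ⟨hb1, hb2⟩; exact ⟨h1.mpr hb1, fun h => hb2 (h2.mp h)⟩
    -- the second exchanged tree
    have hT2 : IsSpanningTree ((S₂ \ {s(u, v)}) ∪ {s(x, y)}) := by
      refine exchange_tree S₂ hS₂ u v x y he2m.1 hxy (fun a => a ∈ Li)
        ?_ hu hv hx hy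
      intro a b haS hne2
      have hci : s(a, b) ∉ cut Li := by
        intro h
        have : s(a, b) ∈ S₂ ∩ cut Li := Finset.mem_inter.mpr ⟨haS, h⟩
        rw [h2i, Finset.mem_singleton] at this
        exact hne2 this
      exact not_mem_cut' hci
    refine ⟨hT1, hT2, ?_, ?_⟩
    · ext a
      simp only [Finset.mem_inter, Finset.mem_union, Finset.mem_sdiff,
        Finset.mem_singleton, Finset.mem_insert]
      constructor
      · rintro ⟨⟨haS, hne1⟩ | rfl, hacut⟩
        · have : a ∈ S₁ ∩ cut Li := Finset.mem_inter.mpr ⟨haS, hacut⟩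
          rw [h1i, Finset.mem_insert, Finset.mem_singleton] at this
          rcases this with h | h
          · exact Or.inl h
          · exact absurd h hne1
        · exact Or.inr rfl
      · rintro (rfl | rfl)
        · exact ⟨Or.inl ⟨he0m.1, hne⟩, he0m.2⟩
        · exact ⟨Or.inr rfl, he2m.2⟩
    · ext a
      simp only [Finset.mem_inter, Finset.mem_union, Finset.mem_sdiff,
        Finset.mem_singleton]
      constructor
      · rintro ⟨⟨haS, hne2⟩ | rfl, hacut⟩
        · have : a ∈ S₂ ∩ cut Li := Finset.mem_inter.mpr ⟨haS, hacut⟩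
          rw [h2i, Finset.mem_singleton] at this
          exact absurd this hne2
        · rfl
      · rintro rfl
        exact ⟨Or.inr rfl, he1m.2⟩
end
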